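/- Let G = (V, E) be a finite simple undirected graph, let k be a natural number, let v₁ ∈ V, and let w : V → ℕ be a weight function. For every w₀ ∈ ℕ, the number of triples (X, X_L, X_R) such that X is a vertex cover of G with |X| = k and w(X) = w₀, (X_L, X_R) is a consistent cut of G[X], and v₁ ∈ X_L, is congruent modulo 2 to the number of sets X such that X is a vertex cover of G with |X| = k, w(X) = w₀, v₁ ∈ X, and G[X] is connected. -/

import Mathlib

/-- `(XL, XR)` is a consistent cut of the subgraph of `G` induced by `X`:
it partitions `X` and no edge of `G` joins a vertex of `XL` to a vertex of `XR`. -/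
def ConsCut {V : Type} [DecidableEq V] (G : SimpleGraph V) (X XL XR : Finset V) : Prop :=
  XL ∪ XR = X ∧ Disjoint XL XR ∧ ∀ u ∈ XL, ∀ v ∈ XR, ¬ G.Adj u v

open SimpleGraph

lemma cut_closed {V : Type} [DecidableEq V] (G : SimpleGraph V) {X XL XR : Finset V}
    (hcut : ConsCut G X XL XR) {a b : ↥(X : Set V)}
    (p : (G.induce (X : Set V)).Walk a b) (ha : ↑a ∈ XL) : ↑b ∈ XL := by
  induction p with
  | nil => exact ha
  | @cons u c d h q ih =>
    apply ih
    have hadj : G.Adj ↑u ↑c := h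
    have hcX : (↑c : V) ∈ XL ∪ XR := by rw [hcut.1]; exact c.2
    rcases Finset.mem_union.1 hcX with hL | hR
    · exact hL
    · exact absurd hadj (hcut.2.2 _ ha _ hR)

open Classical in
/-- the pair of sides of the cut determined by a set `C` of connected components -/
noncomputable def cutOf {V : Type} [DecidableEq V] (G : SimpleGraph V) (X : Finset V)
    (C : Set (G.induce (X : Set V)).ConnectedComponent) : Finset V × Finset V :=
  (X.filter (fun x => ∀ h : x ∈ (X : Set V),
      (G.induce (X : Set V)).connectedComponentMk ⟨x, h⟩ ∈ C),
   X.filter (fun x => ∀ h : x ∈ (X : Set V),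
      (G.induce (X : Set V)).connectedComponentMk ⟨x, h⟩ ∉ C))

lemma mem_cutOf_left {V : Type} [DecidableEq V] (G : SimpleGraph V) (X : Finset V)
    (C : Set (G.induce (X : Set V)).ConnectedComponent) (x : V) (hx : x ∈ (X : Set V)) :
    x ∈ (cutOf G X C).1 ↔ (G.induce (X : Set V)).connectedComponentMk ⟨x, hx⟩ ∈ C := by
  classical
  simp only [cutOf, Finset.mem_filter]
  exact ⟨fun h => h.2 hx, fun h => ⟨hx, fun h' => h⟩⟩

lemma mem_cutOf_right {V : Type} [DecidableEq V] (G : SimpleGraph V) (X : Finset V)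
    (C : Set (G.induce (X : Set V)).ConnectedComponent) (x : V) (hx : x ∈ (X : Set V)) :
    x ∈ (cutOf G X C).2 ↔ (G.induce (X : Set V)).connectedComponentMk ⟨x, hx⟩ ∉ C := by
  classical
  simp only [cutOf, Finset.mem_filter]
  exact ⟨fun h => h.2 hx, fun h => ⟨hx, fun h' => h⟩⟩

lemma cutOf_left_subset {V : Type} [DecidableEq V] (G : SimpleGraph V) (X : Finset V)
    (C : Set (G.induce (X : Set V)).ConnectedComponent) : (cutOf G X C).1 ⊆ X := by
  intro x hx
  simp only [cutOf, Finset.mem_filter] at hx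
  exact hx.1

lemma cutOf_right_subset {V : Type} [DecidableEq V] (G : SimpleGraph V) (X : Finset V)
    (C : Set (G.induce (X : Set V)).ConnectedComponent) : (cutOf G X C).2 ⊆ X := by
  intro x hx
  simp only [cutOf, Finset.mem_filter] at hx
  exact hx.1

lemma key_lemma {V : Type} [Fintype V] [DecidableEq V] (G : SimpleGraph V) {v₁ : V}
    {X : Finset V} (hv : v₁ ∈ X)
    [Decidable ((G.induce (X : Set V)).Connected)] :
    {p : Finset V × Finset V | ConsCut G X p.1 p.2 ∧ v₁ ∈ p.1}.ncard ≡
      (if (G.induce (X : Set V)).Connected then 1 else 0) [MOD 2] := by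
  classical
  have hvX : v₁ ∈ (X : Set V) := hv
  set H := G.induce (X : Set V) with hH
  set c₀ := H.connectedComponentMk ⟨v₁, hvX⟩ with hc₀
  have hbij : Set.BijOn (cutOf G X) {C | c₀ ∈ C}
      {p : Finset V × Finset V | ConsCut G X p.1 p.2 ∧ v₁ ∈ p.1} := by
    refine ⟨?_, ?_, ?_⟩
    · -- MapsTo
      rintro C (hC : c₀ ∈ C)
      refine ⟨⟨?_, ?_, ?_⟩, (mem_cutOf_left G X C v₁ hvX).2 hC⟩
      · ext x
        simp only [Finset.mem_union]
        constructor
        · rintro (h | h)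
          · exact cutOf_left_subset G X C h
          · exact cutOf_right_subset G X C h
        · intro hx
          by_cases hc : H.connectedComponentMk ⟨x, hx⟩ ∈ C
          · exact Or.inl ((mem_cutOf_left G X C x hx).2 hc)
          · exact Or.inr ((mem_cutOf_right G X C x hx).2 hc)
      · rw [Finset.disjoint_left]
        intro x hxL hxR
        have hx : x ∈ (X : Set V) := cutOf_left_subset G X C hxL
        exact (mem_cutOf_right G X C x hx).1 hxR ((mem_cutOf_left G X C x hx).1 hxL)
      · intro u hu v hvv hadj
        have huX : u ∈ (X : Set V) := cutOf_left_subset G X C hu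
        have hvX' : v ∈ (X : Set V) := cutOf_right_subset G X C hvv
        have h1 := (mem_cutOf_left G X C u huX).1 hu
        have h2 := (mem_cutOf_right G X C v hvX').1 hvv
        have hHadj : H.Adj ⟨u, huX⟩ ⟨v, hvX'⟩ := hadj
        have := ConnectedComponent.sound hHadj.reachable
        rw [this] at h1
        exact h2 h1
    · -- InjOn
      intro C hC C' hC' hCC'
      ext c
      induction c using ConnectedComponent.ind with
      | _ x =>
        have hx : (↑x : V) ∈ (X : Set V) := x.2
        have e1 := mem_cutOf_left G X C ↑x hx
        have e2 := mem_cutOf_left G X C' ↑x hx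
        have hxx : (⟨↑x, hx⟩ : ↥(X : Set V)) = x := Subtype.ext rfl
        rw [hxx] at e1 e2
        rw [← e1, ← e2, hCC']
    · -- SurjOn
      rintro ⟨XL, XR⟩ ⟨hcut, hvL⟩
      set C : Set H.ConnectedComponent :=
        {c | ∃ (x : V) (h : x ∈ (X : Set V)), x ∈ XL ∧ H.connectedComponentMk ⟨x, h⟩ = c}
        with hCdef
      have hXLsub : XL ⊆ X := by rw [← hcut.1]; exact Finset.subset_union_left
      have hXRsub : XR ⊆ X := by rw [← hcut.1]; exact Finset.subset_union_right
      have hclosed : ∀ (x : V) (hx : x ∈ (X : Set V)),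
          H.connectedComponentMk ⟨x, hx⟩ ∈ C → x ∈ XL := by
        rintro x hx ⟨u, hu, huL, hcomp⟩
        obtain ⟨p⟩ := ConnectedComponent.exact hcomp
        exact cut_closed G hcut p huL
      refine ⟨C, ⟨v₁, hvX, hvL, rfl⟩, ?_⟩
      have hLeq : (cutOf G X C).1 = XL := by
        ext x
        constructor
        · intro h
          have hx : x ∈ (X : Set V) := cutOf_left_subset G X C h
          exact hclosed x hx ((mem_cutOf_left G X C x hx).1 h)
        · intro h
          have hx : x ∈ (X : Set V) := hXLsub h
          exact (mem_cutOf_left G X C x hx).2 ⟨x, hx, h, rfl⟩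
      have hReq : (cutOf G X C).2 = XR := by
        ext x
        constructor
        · intro h
          have hx : x ∈ (X : Set V) := cutOf_right_subset G X C h
          have hnotC := (mem_cutOf_right G X C x hx).1 h
          have hxu : x ∈ XL ∪ XR := by rw [hcut.1]; exact hx
          rcases Finset.mem_union.1 hxu with hL | hR
          · exact absurd (⟨x, hx, hL, rfl⟩ : H.connectedComponentMk ⟨x, hx⟩ ∈ C) hnotC
          · exact hR
        · intro h
          have hx : x ∈ (X : Set V) := hXRsub h
          refine (mem_cutOf_right G X C x hx).2 (fun hc => ?_)
          exact Finset.disjoint_left.1 hcut.2.1 (hclosed x hx hc) h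
      exact Prod.ext hLeq hReq
  have hcard : {p : Finset V × Finset V | ConsCut G X p.1 p.2 ∧ v₁ ∈ p.1}.ncard
      = {C : Set H.ConnectedComponent | c₀ ∈ C}.ncard := by
    rw [← hbij.image_eq, Set.ncard_image_of_injOn hbij.injOn]
  rw [hcard]
  set m := Fintype.card {c : H.ConnectedComponent // c ≠ c₀} with hm
  have hcount : {C : Set H.ConnectedComponent | c₀ ∈ C}.ncard = 2 ^ m := by
    have e : {C : Set H.ConnectedComponent | c₀ ∈ C} ≃
        Set {c : H.ConnectedComponent // c ≠ c₀} := by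
      refine ⟨fun C => {c | (c : H.ConnectedComponent) ∈ C.1},
        fun D => ⟨{c | c = c₀ ∨ ∃ h : c ≠ c₀, (⟨c, h⟩ : {c // c ≠ c₀}) ∈ D}, Or.inl rfl⟩,
        ?_, ?_⟩
      · rintro ⟨C, hC⟩
        ext c
        simp only [Set.mem_setOf_eq]
        constructor
        · rintro (rfl | ⟨h, hc⟩)
          · exact hC
          · exact hc
        · intro hc
          by_cases h : c = c₀
          · exact Or.inl h
          · exact Or.inr ⟨h, hc⟩
      · intro D
        ext c
        simp only [Set.mem_setOf_eq]
        constructor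
        · rintro (h | ⟨h, hc⟩)
          · exact absurd h c.2
          · exact hc
        · intro hc
          exact Or.inr ⟨c.2, hc⟩
    rw [Set.ncard_eq_toFinset_card', Set.toFinset_card, Fintype.card_congr e,
      ← Fintype.card_congr (Fintype.finsetEquivSet
        (α := {c : H.ConnectedComponent // c ≠ c₀}))]
    exact Fintype.card_finset
  rw [hcount]
  have hall_of_conn : (G.induce (X : Set V)).Connected →
      ∀ c : H.ConnectedComponent, c = c₀ := by
    intro hc c
    induction c using ConnectedComponent.ind with
    | _ x => exact ConnectedComponent.sound (hc.preconnected x ⟨v₁, hvX⟩)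
  have hconn : (G.induce (X : Set V)).Connected ↔ m = 0 := by
    rw [hm, Fintype.card_eq_zero_iff]
    constructor
    · intro hc
      exact ⟨fun c => c.2 (hall_of_conn hc c.1)⟩
    · intro he
      have hall : ∀ c : H.ConnectedComponent, c = c₀ := by
        intro c
        by_contra h
        exact he.false ⟨c, h⟩
      have hne : Nonempty ↥(X : Set V) := ⟨⟨v₁, hvX⟩⟩
      exact ⟨fun a b => ConnectedComponent.exact
        ((hall (H.connectedComponentMk a)).trans (hall (H.connectedComponentMk b)).symm)⟩
  by_cases hc : (G.induce (X : Set V)).Connected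
  · rw [if_pos hc, hconn.1 hc]
    rfl
  · rw [if_neg hc]
    have hm0 : m ≠ 0 := fun h => hc (hconn.2 h)
    obtain ⟨m', hm'⟩ := Nat.exists_eq_succ_of_ne_zero hm0
    rw [hm']
    show 2 ^ (m' + 1) % 2 = 0 % 2
    simp [pow_succ, Nat.mul_mod]

/-- Cut&Count correctness for **Connected Vertex Cover**: for every target weight `w₀`, the
number of triples `(X, X_L, X_R)` where `X` is a vertex cover of `G` of size `k` and weight
`w₀`, `(X_L, X_R)` is a consistent cut of `G[X]` and `v₁ ∈ X_L`, is congruent modulo 2 to the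
number of vertex covers `X` of size `k` and weight `w₀` with `v₁ ∈ X` and `G[X]` connected. -/
theorem cvc_cut_and_count {V : Type} [Fintype V] [DecidableEq V] (G : SimpleGraph V)
    (k : ℕ) (v₁ : V) (w : V → ℕ) (w₀ : ℕ) :
    Set.ncard {t : Finset V × Finset V × Finset V |
        (∀ u v, G.Adj u v → u ∈ t.1 ∨ v ∈ t.1) ∧ t.1.card = k ∧ (∑ u ∈ t.1, w u) = w₀ ∧
        ConsCut G t.1 t.2.1 t.2.2 ∧ v₁ ∈ t.2.1} ≡
      Set.ncard {X : Finset V |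
        (∀ u v, G.Adj u v → u ∈ X ∨ v ∈ X) ∧ X.card = k ∧ (∑ u ∈ X, w u) = w₀ ∧
        v₁ ∈ X ∧ (G.induce (X : Set V)).Connected} [MOD 2] := by
  classical
  set Q : Finset V → Prop :=
    fun X => (∀ u v, G.Adj u v → u ∈ X ∨ v ∈ X) ∧ X.card = k ∧ (∑ u ∈ X, w u) = w₀ with hQ
  set T : Finset (Finset V × Finset V × Finset V) :=
    Finset.univ.filter (fun t => Q t.1 ∧ ConsCut G t.1 t.2.1 t.2.2 ∧ v₁ ∈ t.2.1) with hT
  set A : Finset (Finset V) := Finset.univ.filter Q with hA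
  set B : Finset (Finset V) :=
    Finset.univ.filter (fun X => Q X ∧ v₁ ∈ X ∧ (G.induce (X : Set V)).Connected) with hB
  have hLHS : {t : Finset V × Finset V × Finset V |
      (∀ u v, G.Adj u v → u ∈ t.1 ∨ v ∈ t.1) ∧ t.1.card = k ∧ (∑ u ∈ t.1, w u) = w₀ ∧
      ConsCut G t.1 t.2.1 t.2.2 ∧ v₁ ∈ t.2.1}.ncard = T.card := by
    rw [← Set.ncard_coe_finset]
    congr 1
    ext t
    simp only [hT, Finset.coe_filter, Set.mem_setOf_eq, Finset.mem_univ, true_and, hQ]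
    tauto
  have hRHS : {X : Finset V |
      (∀ u v, G.Adj u v → u ∈ X ∨ v ∈ X) ∧ X.card = k ∧ (∑ u ∈ X, w u) = w₀ ∧
      v₁ ∈ X ∧ (G.induce (X : Set V)).Connected}.ncard = B.card := by
    rw [← Set.ncard_coe_finset]
    congr 1
    ext X
    simp only [hB, Finset.coe_filter, Set.mem_setOf_eq, Finset.mem_univ, true_and, hQ]
    tauto
  rw [hLHS, hRHS]
  have hTsum : T.card = ∑ X ∈ A, (T.filter (fun t => t.1 = X)).card := by
    apply Finset.card_eq_sum_card_fiberwise
    intro t ht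
    simp only [hT, Finset.mem_coe, Finset.mem_filter, Finset.mem_univ, true_and] at ht
    simp only [hA, Finset.mem_coe, Finset.mem_filter, Finset.mem_univ, true_and]
    exact ht.1
  have hfiber : ∀ X ∈ A, (T.filter (fun t => t.1 = X)).card =
      {p : Finset V × Finset V | ConsCut G X p.1 p.2 ∧ v₁ ∈ p.1}.ncard := by
    intro X hX
    simp only [hA, Finset.mem_filter, Finset.mem_univ, true_and] at hX
    have : {p : Finset V × Finset V | ConsCut G X p.1 p.2 ∧ v₁ ∈ p.1} =
        ↑(Finset.univ.filter (fun p : Finset V × Finset V =>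
          ConsCut G X p.1 p.2 ∧ v₁ ∈ p.1)) := by
      ext p
      simp only [Finset.coe_filter, Set.mem_setOf_eq, Finset.mem_univ, true_and]
    rw [this, Set.ncard_coe_finset]
    apply Finset.card_bij (fun t _ => t.2)
    · intro t ht
      simp only [hT, Finset.mem_filter, Finset.mem_univ, true_and] at ht
      obtain ⟨⟨hq, hcut, hvl⟩, h1⟩ := ht
      subst h1
      simp only [Finset.mem_filter, Finset.mem_univ, true_and]
      exact ⟨hcut, hvl⟩
    · intro t1 ht1 t2 ht2 h
      simp only [Finset.mem_filter] at ht1 ht2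
      exact Prod.ext (ht1.2.trans ht2.2.symm) h
    · intro p hp
      simp only [Finset.mem_filter, Finset.mem_univ, true_and] at hp
      refine ⟨(X, p), ?_, rfl⟩
      simp only [hT, Finset.mem_filter, Finset.mem_univ, true_and]
      exact ⟨⟨hX, hp.1, hp.2⟩, trivial⟩
  have hBsum : B.card = ∑ X ∈ A,
      (if v₁ ∈ X ∧ (G.induce (X : Set V)).Connected then 1 else 0) := by
    rw [hB, hA, ← Finset.card_filter, Finset.filter_filter]
  rw [hTsum, hBsum]
  have : ∀ X ∈ A, (T.filter (fun t => t.1 = X)).card ≡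
      (if v₁ ∈ X ∧ (G.induce (X : Set V)).Connected then 1 else 0) [MOD 2] := by
    intro X hX
    rw [hfiber X hX]
    by_cases hv : v₁ ∈ X
    · have := key_lemma G (v₁ := v₁) (X := X) hv
      simpa [hv] using this
    · have hempty : {p : Finset V × Finset V | ConsCut G X p.1 p.2 ∧ v₁ ∈ p.1} = ∅ := by
        ext p
        simp only [Set.mem_setOf_eq, Set.mem_empty_iff_false, iff_false, not_and]
        intro hcut hvl
        apply hv
        rw [← hcut.1]
        exact Finset.mem_union_left _ hvl
      rw [hempty]
      simp [hv, Set.ncard_empty, Nat.ModEq.refl]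
  -- sum the congruences
  show _ % 2 = _ % 2
  rw [Finset.sum_nat_mod]
  conv_rhs => rw [Finset.sum_nat_mod]
  congr 1
  exact Finset.sum_congr rfl this
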